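/- Let ζ₈ = exp(2πi/8), let σ be the ring automorphism of ℤ[ζ₈] determined by ζ₈ ↦ ζ₈³, let W₈ ⊂ ℂ ≅ ℝ² be the closed regular octagon centered at the origin with edge length 1 whose edges are perpendicular to the directions exp(ikπ/4) (k = 0,…,7), and let T = {x ∈ ℤ[ζ₈] : σ(x) ∈ W₈} be the Ammann–Beenker vertex set. Then a nonzero x ∈ T, written uniquely as x = x₁ + x₂ζ₈ with x₁, x₂ ∈ ℤ[√2], is visible from the origin in T (i.e., there is no t ∈ (0,1) with t·x ∈ T) if and only if (1+√2)·σ(x) ∉ W₈ and the ideal of ℤ[√2] generated by x₁ and x₂ is all of ℤ[√2]. -/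

import Mathlib

open Complex

/-- The primitive 8-th root of unity. -/
noncomputable def zeta8 : ℂ := Complex.exp (2 * Real.pi * Complex.I / 8)

/-- The ring of 8-th cyclotomic integers, as a subring of ℂ. -/
noncomputable def R8 : Subring ℂ := Subring.closure {zeta8}

/-- The subring ℤ[√2] of ℂ, generated by √2 = ζ₈ + ζ₈⁻¹. -/
noncomputable def S8 : Subring ℂ := Subring.closure {zeta8 + zeta8⁻¹}

/-- The closed regular octagon of edge length 1 centered at the origin whose
edges are perpendicular to the eight directions exp(ikπ/4): the intersection of
the half-planes Re(z · conj(exp(ikπ/4))) ≤ (1+√2)/2, the apothem of such an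
octagon being (1/2)·cot(π/8) = (1+√2)/2. -/
noncomputable def W8 : Set ℂ :=
  {z : ℂ | ∀ k : Fin 8,
    (z * (starRingEnd ℂ) (Complex.exp (((k : ℕ) : ℂ) * Real.pi * Complex.I / 4))).re ≤
      (1 + Real.sqrt 2) / 2}

/-- The Ammann–Beenker vertex set T = {x ∈ ℤ[ζ₈] : σ(x) ∈ W₈}, where σ is the
star map. -/
noncomputable def ABverts (σ : R8 →+* ℂ) : Set ℂ :=
  {z : ℂ | ∃ hz : z ∈ R8, σ ⟨z, hz⟩ ∈ W8}


namespace AB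

noncomputable def rt2 : ℝ := Real.sqrt 2

lemma rt2_sq : rt2 * rt2 = 2 := Real.mul_self_sqrt (by norm_num)
lemma rt2_pos : 0 < rt2 := Real.sqrt_pos.2 (by norm_num)
lemma rt2_gt_one : 1 < rt2 := by nlinarith [rt2_sq, rt2_pos]
lemma rt2_lt : rt2 < 3/2 := by nlinarith [rt2_sq, rt2_pos]

lemma zeta8_def : zeta8 = Complex.exp (Real.pi / 4 * Complex.I) := by
  unfold zeta8; ring_nf

lemma zeta8_rect : zeta8 = (rt2/2 : ℝ) + (rt2/2 : ℝ) * Complex.I := by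
  rw [zeta8_def, Complex.exp_mul_I]
  have h1 : (Real.pi : ℂ) / 4 = ((Real.pi / 4 : ℝ) : ℂ) := by push_cast; ring
  rw [h1, ← Complex.ofReal_cos, ← Complex.ofReal_sin,
    Real.cos_pi_div_four, Real.sin_pi_div_four]
  norm_num [rt2]

lemma zeta8_sq : zeta8 ^ 2 = Complex.I := by
  rw [zeta8_def, ← Complex.exp_nat_mul]
  have : ((2:ℕ) : ℂ) * (Real.pi / 4 * Complex.I) = (Real.pi/2 : ℝ) * Complex.I := by
    push_cast; ring
  rw [this, Complex.exp_mul_I]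
  have h1 : ((Real.pi/2 : ℝ) : ℂ) = ((Real.pi / 2 : ℝ) : ℂ) := rfl
  rw [← Complex.ofReal_cos, ← Complex.ofReal_sin, Real.cos_pi_div_two, Real.sin_pi_div_two]
  simp

lemma zeta8_pow4 : zeta8 ^ 4 = -1 := by
  have : zeta8 ^ 4 = (zeta8 ^ 2) ^ 2 := by ring
  rw [this, zeta8_sq, Complex.I_sq]

lemma zeta8_pow8 : zeta8 ^ 8 = 1 := by
  have : zeta8 ^ 8 = (zeta8 ^ 4) ^ 2 := by ring
  rw [this, zeta8_pow4]; ring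

lemma zeta8_pow_nat (k : ℕ) :
    Complex.exp (((k : ℕ) : ℂ) * Real.pi * Complex.I / 4) = zeta8 ^ k := by
  rw [zeta8_def, ← Complex.exp_nat_mul]; ring_nf

lemma rt2C : ((rt2 : ℝ) : ℂ) = zeta8 - zeta8 ^ 3 := by
  have h3 : zeta8 ^ 3 = zeta8 ^ 2 * zeta8 := by ring
  rw [h3, zeta8_sq, zeta8_rect]
  push_cast
  linear_combination (rt2/2 : ℂ) * Complex.I_sq

lemma zeta8_inv : zeta8⁻¹ = - zeta8 ^ 3 := by
  have h : zeta8 * (-zeta8 ^ 3) = 1 := by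
    have : zeta8 * (-zeta8 ^ 3) = -(zeta8 ^ 4) := by ring
    rw [this, zeta8_pow4]; ring
  exact inv_eq_of_mul_eq_one_right h

lemma gen_eq : zeta8 + zeta8⁻¹ = ((rt2 : ℝ) : ℂ) := by
  rw [zeta8_inv, rt2C]; ring

lemma zeta8_ne : zeta8 ≠ 0 := by
  rw [zeta8_def]; exact Complex.exp_ne_zero _

end AB

namespace AB
open Zsqrtd

lemma two_nonsquare : ∀ n : ℤ, (2:ℤ) ≠ n * n := by
  intro n h
  rcases le_or_gt n 1 with h1 | h1
  · rcases le_or_gt (-1) n with h2 | h2 <;> nlinarith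
  · nlinarith

/-- real embedding of ℤ√2 -/
noncomputable def emb : ℤ√2 →+* ℝ := Zsqrtd.toReal (by norm_num)

lemma emb_apply (u : ℤ√2) : emb u = u.re + u.im * rt2 := by
  simp [emb, Zsqrtd.toReal_apply, rt2]

lemma emb_inj : Function.Injective emb :=
  Zsqrtd.toReal_injective _ two_nonsquare

/-- complex embedding of ℤ√2 -/
noncomputable def embC : ℤ√2 →+* ℂ := Complex.ofRealHom.comp emb

lemma embC_apply (u : ℤ√2) : embC u = (u.re : ℂ) + (u.im : ℂ) * ((rt2:ℝ):ℂ) := by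
  simp [embC, emb_apply]

lemma embC_inj : Function.Injective embC := by
  intro a b h
  exact emb_inj (Complex.ofReal_injective h)

lemma embC_real (u : ℤ√2) : embC u = ((emb u : ℝ) : ℂ) := rfl

lemma S8_gen : S8 = Subring.closure {((rt2:ℝ):ℂ)} := by
  unfold S8; rw [gen_eq]

lemma embC_mem_S8 (u : ℤ√2) : embC u ∈ S8 := by
  rw [S8_gen, embC_apply]
  exact add_mem (intCast_mem _ _)
    (mul_mem (intCast_mem _ _) (Subring.subset_closure rfl))

lemma mem_S8 (z : ℂ) (hz : z ∈ S8) : ∃ u : ℤ√2, embC u = z := by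
  rw [S8_gen] at hz
  induction hz using Subring.closure_induction with
  | mem y hy => exact ⟨⟨0,1⟩, by rw [Set.mem_singleton_iff] at hy; rw [hy, embC_apply]; simp⟩
  | one => exact ⟨1, map_one _⟩
  | zero => exact ⟨0, map_zero _⟩
  | add a b _ _ ha hb =>
      obtain ⟨u, hu⟩ := ha; obtain ⟨v, hv⟩ := hb
      exact ⟨u + v, by rw [map_add, hu, hv]⟩
  | neg a _ ha => obtain ⟨u, hu⟩ := ha; exact ⟨-u, by rw [map_neg, hu]⟩
  | mul a b _ _ ha hb =>
      obtain ⟨u, hu⟩ := ha; obtain ⟨v, hv⟩ := hb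
      exact ⟨u * v, by rw [map_mul, hu, hv]⟩

lemma zeta8_mem : zeta8 ∈ R8 := Subring.subset_closure rfl

lemma rt2_mem_R8 : ((rt2:ℝ):ℂ) ∈ R8 := by
  rw [rt2C]; exact sub_mem zeta8_mem (pow_mem zeta8_mem 3)

lemma embC_mem_R8 (u : ℤ√2) : embC u ∈ R8 := by
  rw [embC_apply]
  exact add_mem (intCast_mem _ _) (mul_mem (intCast_mem _ _) rt2_mem_R8)

/-- every element of R8 is u + v ζ with u v ∈ ℤ√2 -/
lemma mem_R8 (z : ℂ) (hz : z ∈ R8) : ∃ u v : ℤ√2, z = embC u + embC v * zeta8 := by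
  induction hz using Subring.closure_induction with
  | mem y hy =>
      rw [Set.mem_singleton_iff] at hy
      exact ⟨0, 1, by rw [hy]; simp⟩
  | one => exact ⟨1, 0, by simp⟩
  | zero => exact ⟨0, 0, by simp⟩
  | add a b _ _ ha hb =>
      obtain ⟨u, v, hu⟩ := ha; obtain ⟨u', v', hv⟩ := hb
      exact ⟨u + u', v + v', by rw [hu, hv, map_add, map_add]; ring⟩
  | neg a _ ha =>
      obtain ⟨u, v, hu⟩ := ha
      exact ⟨-u, -v, by rw [hu, map_neg, map_neg]; ring⟩
  | mul a b _ _ ha hb =>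
      obtain ⟨u, v, hu⟩ := ha; obtain ⟨u', v', hv⟩ := hb
      refine ⟨u * u' - v * v', u * v' + v * u' + v * v' * ⟨0,1⟩, ?_⟩
      rw [hu, hv]
      have h2 : zeta8 ^ 2 = embC ⟨0,1⟩ * zeta8 - 1 := by
        have : embC ⟨0,1⟩ = ((rt2:ℝ):ℂ) := by rw [embC_apply]; simp
        rw [this, rt2C]; linear_combination zeta8_pow4
      push_cast [map_sub, map_add, map_mul]
      linear_combination (embC v * embC v') * h2

end AB

namespace AB
open Zsqrtd

lemma zeta8_im : zeta8.im = rt2/2 := by rw [zeta8_rect]; simp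
lemma zeta8_re : zeta8.re = rt2/2 := by rw [zeta8_rect]; simp

lemma real_decomp_unique {r s r' s' : ℝ}
    (h : (r:ℂ) + (s:ℂ) * zeta8 = (r':ℂ) + (s':ℂ) * zeta8) : r = r' ∧ s = s' := by
  have him := congrArg Complex.im h
  have hre := congrArg Complex.re h
  simp [Complex.add_im, Complex.mul_im, Complex.add_re, Complex.mul_re, zeta8_im, zeta8_re] at him hre
  have hs : s = s' := by
    rcases him with h2 | h2
    · exact h2
    · nlinarith [rt2_pos]
  refine ⟨?_, hs⟩
  subst hs
  nlinarith [hre, rt2_pos]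

lemma decomp_unique {u v u' v' : ℤ√2}
    (h : embC u + embC v * zeta8 = embC u' + embC v' * zeta8) : u = u' ∧ v = v' := by
  rw [embC_real, embC_real, embC_real, embC_real] at h
  obtain ⟨h1, h2⟩ := real_decomp_unique h
  exact ⟨emb_inj h1, emb_inj h2⟩

lemma sigma_spec (σ : R8 →+* ℂ) (hσ : σ ⟨zeta8, Subring.subset_closure rfl⟩ = zeta8 ^ 3)
    (u v : ℤ√2) (z : ℂ) (hz : z ∈ R8) (he : z = embC u + embC v * zeta8) :
    σ ⟨z, hz⟩ = embC (star u) + embC (star v) * zeta8 ^ 3 := by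
  set g : R8 := ⟨zeta8, Subring.subset_closure rfl⟩ with hg
  have hgc : (g : ℂ) = zeta8 := rfl
  have hev : (⟨z, hz⟩ : R8) = ((u.re : ℤ) : R8) + ((u.im : ℤ) : R8) * (g - g^3)
      + (((v.re:ℤ) : R8) + ((v.im:ℤ):R8) * (g - g^3)) * g := by
    apply Subtype.ext
    push_cast [hgc]
    rw [he, embC_apply, embC_apply, rt2C]
    try ring
  rw [hev]
  simp only [map_add, map_mul, map_sub, map_pow, map_intCast, hσ]
  have h9 : (zeta8 ^ 3) ^ 3 = zeta8 := by
    have : (zeta8 ^ 3) ^ 3 = zeta8 ^ 8 * zeta8 := by ring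
    rw [this, zeta8_pow8, one_mul]
  rw [h9, embC_apply, embC_apply, rt2C]
  push_cast [Zsqrtd.re_star, Zsqrtd.im_star]
  ring

end AB

namespace AB
open Zsqrtd

lemma mem_W8_iff (z : ℂ) : z ∈ W8 ↔
    ∀ k : Fin 8, (z * (starRingEnd ℂ) (zeta8 ^ (k:ℕ))).re ≤ (1 + rt2) / 2 := by
  unfold W8
  constructor <;> intro h k <;> have hk := h k
  · rwa [zeta8_pow_nat] at hk
  · rwa [zeta8_pow_nat]

lemma zeta8_pow_mod (m : ℕ) : zeta8 ^ (m % 8) = zeta8 ^ m := by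
  conv_rhs => rw [← Nat.div_add_mod m 8]
  rw [pow_add, pow_mul, zeta8_pow8, one_pow, one_mul]

lemma W8_neg {z : ℂ} (hz : z ∈ W8) : -z ∈ W8 := by
  rw [mem_W8_iff] at hz ⊢
  intro k
  have h := hz (k + 4)
  have hval : ((k + 4 : Fin 8) : ℕ) = ((k:ℕ) + 4) % 8 := by
    rw [Fin.val_add]; rfl
  have hpow : zeta8 ^ (((k:ℕ) + 4) % 8) = - zeta8 ^ (k:ℕ) := by
    rw [zeta8_pow_mod, pow_add, zeta8_pow4]; ring
  rw [hval, hpow, map_neg] at h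
  rw [show -z * (starRingEnd ℂ) (zeta8 ^ (k:ℕ)) =
    z * -((starRingEnd ℂ) (zeta8 ^ (k:ℕ))) by ring]
  exact h

lemma W8_scale {z : ℂ} (hz : z ∈ W8) {c : ℝ} (h0 : 0 ≤ c) (h1 : c ≤ 1) :
    (c:ℂ) * z ∈ W8 := by
  rw [mem_W8_iff] at hz ⊢
  intro k
  have h := hz k
  rw [mul_assoc, Complex.re_ofReal_mul]
  rcases le_or_gt (z * (starRingEnd ℂ) (zeta8 ^ (k:ℕ))).re 0 with hle | hlt
  · nlinarith [rt2_pos]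
  · nlinarith

lemma W8_of_smul {z : ℂ} {s b : ℝ} (hm : (s:ℂ) * z ∈ W8) (hb : 0 ≤ b)
    (hbs : b ≤ |s|) (hs : s ≠ 0) : (b:ℂ) * z ∈ W8 := by
  have habs : ((|s| : ℝ) : ℂ) * z ∈ W8 := by
    rcases abs_cases s with ⟨h1, _⟩ | ⟨h1, _⟩
    · rwa [h1]
    · rw [h1]; push_cast
      rw [show (-(s:ℂ)) * z = -((s:ℂ) * z) by ring]
      exact W8_neg hm
  have hane : |s| ≠ 0 := abs_ne_zero.2 hs
  have hapos : 0 < |s| := abs_pos.2 hs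
  have : (b:ℂ) * z = ((b / |s| : ℝ) : ℂ) * ((|s| : ℝ) : ℂ) * z := by
    have : ((|s| : ℝ) : ℂ) ≠ 0 := by exact_mod_cast abs_ne_zero.2 hs
    push_cast
    field_simp
  rw [this, mul_assoc]
  exact W8_scale habs (by positivity) (by rw [div_le_one hapos]; exact hbs)

end AB

namespace AB
open Zsqrtd

lemma emb_add_star (u : ℤ√2) : emb u + emb (star u) = 2 * (u.re : ℝ) := by
  rw [emb_apply, emb_apply, Zsqrtd.re_star, Zsqrtd.im_star]
  push_cast; ring

lemma emb_mul_star (u : ℤ√2) : emb u * emb (star u) = ((Zsqrtd.norm u : ℤ) : ℝ) := by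
  rw [emb_apply, emb_apply, Zsqrtd.re_star, Zsqrtd.im_star, Zsqrtd.norm_def]
  push_cast
  linear_combination (-(u.im:ℝ)^2) * rt2_sq

lemma emb_ne_zero {u : ℤ√2} (hu : u ≠ 0) : emb u ≠ 0 := by
  intro h
  exact hu (emb_inj (by rw [h, map_zero]))

lemma star_ne_zero {u : ℤ√2} (hu : u ≠ 0) : star u ≠ 0 := by
  intro h
  exact hu (by simpa using congrArg star h)

lemma norm_abs_ge_one {u : ℤ√2} (hu : u ≠ 0) : 1 ≤ |((Zsqrtd.norm u : ℤ) : ℝ)| := by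
  have h0 : Zsqrtd.norm u ≠ 0 := fun h => hu ((Zsqrtd.norm_eq_zero two_nonsquare u).1 h)
  have : (1:ℤ) ≤ |Zsqrtd.norm u| := Int.one_le_abs h0
  calc (1:ℝ) = ((1:ℤ):ℝ) := by norm_num
  _ ≤ ((|Zsqrtd.norm u| : ℤ) : ℝ) := by exact_mod_cast this
  _ = |((Zsqrtd.norm u : ℤ) : ℝ)| := by push_cast; ring

/-- Key inequality: an element of ℤ[√2] strictly between 0 and 1 has
conjugate of absolute value at least 1+√2. -/
lemma key_ineq (w : ℤ√2) (h0 : 0 < emb w) (h1 : emb w < 1) :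
    1 + rt2 ≤ |emb (star w)| := by
  by_contra hcon
  push_neg at hcon
  have hw0 : w ≠ 0 := by
    intro h; rw [h, map_zero] at h0; exact lt_irrefl _ h0
  have hn := norm_abs_ge_one hw0
  rw [← emb_mul_star, abs_mul] at hn
  have hwabs : |emb w| = emb w := abs_of_pos h0
  have hs1 : 1 < |emb (star w)| := by nlinarith [abs_nonneg (emb (star w))]
  have hre := emb_add_star w
  have hsb := abs_lt.1 hcon
  have hr1 := rt2_gt_one
  have hr2 := rt2_lt
  have hemb := emb_apply w
  have hembs : emb (star w) = (w.re : ℝ) - (w.im : ℝ) * rt2 := by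
    rw [emb_apply, Zsqrtd.re_star, Zsqrtd.im_star]; push_cast; ring
  -- bounds on a := w.re
  have ha1 : (-1 : ℤ) ≤ w.re := by
    by_contra h
    push_neg at h
    have : w.re ≤ -2 := by omega
    have : (w.re : ℝ) ≤ -2 := by exact_mod_cast this
    nlinarith
  have ha2 : w.re ≤ 1 := by
    by_contra h
    push_neg at h
    have : (2:ℤ) ≤ w.re := by omega
    have : (2:ℝ) ≤ (w.re : ℝ) := by exact_mod_cast this
    nlinarith
  interval_cases h : w.re
  · -- a = -1 : then b = 1 and |star| = 1 + rt2, contradiction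
    push_cast at hemb hembs
    have hb : w.im = 1 := by
      by_contra hb
      rcases lt_trichotomy w.im 1 with hlt | heq | hgt
      · have : w.im ≤ 0 := by omega
        have : (w.im : ℝ) ≤ 0 := by exact_mod_cast this
        nlinarith
      · exact hb heq
      · have : (2:ℤ) ≤ w.im := by omega
        have : (2:ℝ) ≤ (w.im : ℝ) := by exact_mod_cast this
        nlinarith
    rw [hb] at hembs
    push_cast at hembs
    have : emb (star w) = -(1 + rt2) := by rw [hembs]; ring
    rw [this, abs_neg, abs_of_pos (by nlinarith)] at hcon
    exact lt_irrefl _ hcon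
  · -- a = 0
    push_cast at hemb
    rcases le_or_gt 1 w.im with hb | hb
    · have : (1:ℝ) ≤ (w.im : ℝ) := by exact_mod_cast hb
      nlinarith
    · have : w.im ≤ 0 := by omega
      have : (w.im : ℝ) ≤ 0 := by exact_mod_cast this
      nlinarith
  · -- a = 1
    push_cast at hemb
    rcases le_or_gt 0 w.im with hb | hb
    · rcases le_or_gt 1 w.im with hb1 | hb1
      · have : (1:ℝ) ≤ (w.im : ℝ) := by exact_mod_cast hb1
        nlinarith
      · have : w.im = 0 := by omega
        rw [this] at hemb
        push_cast at hemb
        nlinarith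
    · have : w.im ≤ -1 := by omega
      have : (w.im : ℝ) ≤ -1 := by exact_mod_cast this
      nlinarith

/-- second key inequality -/
lemma key_ineq2 (w : ℤ√2) (h0 : 0 < emb w) (hs1 : 1 ≤ |emb (star w)|)
    (hs2 : |emb (star w)| < 1 + rt2) (hn : 2 ≤ |((Zsqrtd.norm w : ℤ) : ℝ)|) :
    1 < emb w := by
  by_contra hcon
  push_neg at hcon
  have hprod : emb w * emb (star w) = ((Zsqrtd.norm w : ℤ) : ℝ) := emb_mul_star w
  have hwabs : |emb w| = emb w := abs_of_pos h0
  have habs : emb w * |emb (star w)| = |((Zsqrtd.norm w : ℤ) : ℝ)| := by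
    rw [← hprod, abs_mul, hwabs]
  have hsge2 : 2 ≤ |emb (star w)| := by nlinarith
  have hre := emb_add_star w
  have hr1 := rt2_gt_one
  have hr2 := rt2_lt
  -- emb w > 2 rt2 - 2
  have hwlb : 2 * rt2 - 2 < emb w := by
    have h2 : emb w * |emb (star w)| < emb w * (1 + rt2) := by nlinarith
    nlinarith [rt2_sq]
  rcases abs_cases (emb (star w)) with ⟨he, _⟩ | ⟨he, _⟩
  · -- star positive : 2 rt2 < 2a < 2 + rt2
    rw [he] at hsge2 hs2
    rcases le_or_gt w.re 1 with ha | ha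
    · have : (w.re : ℝ) ≤ 1 := by exact_mod_cast ha
      nlinarith
    · have : (2:ℤ) ≤ w.re := by omega
      have : (2:ℝ) ≤ (w.re : ℝ) := by exact_mod_cast this
      nlinarith
  · -- star negative
    rw [he] at hsge2 hs2
    rcases le_or_gt w.re (-1) with ha | ha
    · have : (w.re : ℝ) ≤ -1 := by exact_mod_cast ha
      nlinarith
    · have : (0:ℤ) ≤ w.re := by omega
      have : (0:ℝ) ≤ (w.re : ℝ) := by exact_mod_cast this
      nlinarith

end AB

namespace AB
open Zsqrtd

lemma round_lemma (p n : ℤ) (hn : 0 < n) : ∃ a : ℤ, 2 * |p - a * n| ≤ n := by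
  refine ⟨(2 * p + n) / (2 * n), ?_⟩
  have h2n : 0 < 2 * n := by omega
  have hmod := Int.emod_nonneg (2 * p + n) (by omega : (2:ℤ) * n ≠ 0)
  have hmod2 := Int.emod_lt_of_pos (2 * p + n) h2n
  have heq := Int.mul_ediv_add_emod (2 * p + n) (2 * n)
  set a := (2 * p + n) / (2 * n) with ha
  set m := (2 * p + n) % (2 * n) with hm
  have key : 2 * (p - a * n) = m - n := by linarith [heq]
  rcases abs_cases (p - a * n) with ⟨h, _⟩ | ⟨h, _⟩ <;> omega

lemma round_lemma' (p n : ℤ) (hn : n ≠ 0) : ∃ a : ℤ, 2 * |p - a * n| ≤ |n| := by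
  rcases lt_or_gt_of_ne hn with h | h
  · obtain ⟨a, ha⟩ := round_lemma p (-n) (by omega)
    refine ⟨-a, ?_⟩
    have h1 : p - -a * n = p - a * -n := by ring
    rw [h1]
    rcases abs_cases (p - a * -n) with ⟨h2, _⟩ | ⟨h2, _⟩ <;>
      rcases abs_cases n with ⟨h3, _⟩ | ⟨h3, _⟩ <;> omega
  · obtain ⟨a, ha⟩ := round_lemma p n h
    refine ⟨a, ?_⟩
    rw [abs_of_pos h]
    exact ha

lemma div_lemma (u v : ℤ√2) (hv : v ≠ 0) :
    ∃ q r : ℤ√2, u = q * v + r ∧ (Zsqrtd.norm r).natAbs < (Zsqrtd.norm v).natAbs := by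
  set n := Zsqrtd.norm v with hn
  have hn0 : n ≠ 0 := fun h => hv ((Zsqrtd.norm_eq_zero two_nonsquare v).1 h)
  set c := u * star v with hc
  obtain ⟨a, hA⟩ := round_lemma' c.re n hn0
  obtain ⟨b, hB⟩ := round_lemma' c.im n hn0
  refine ⟨⟨a, b⟩, u - ⟨a, b⟩ * v, by ring, ?_⟩
  set r := u - (⟨a, b⟩ : ℤ√2) * v with hr
  set A := c.re - a * n with hA2
  set B := c.im - b * n with hB2
  have hvs : v * star v = ((n : ℤ) : ℤ√2) := by
    rw [hn, ← Zsqrtd.norm_eq_mul_conj]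
  have hrs : r * star v = ⟨A, B⟩ := by
    have h1 : r * star v = c - (⟨a, b⟩ : ℤ√2) * ((n : ℤ) : ℤ√2) := by
      rw [← hvs, hc]; ring
    rw [h1]
    ext <;> simp [Zsqrtd.re_mul, Zsqrtd.im_mul, hA2, hB2] <;> ring
  have hnormr : Zsqrtd.norm r * n = A^2 - 2 * B^2 := by
    have h2 : Zsqrtd.norm (r * star v) = Zsqrtd.norm r * n := by
      rw [Zsqrtd.norm_mul, Zsqrtd.norm_conj, hn]
    rw [hrs] at h2
    rw [← h2, Zsqrtd.norm_def]; ring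
  -- now show |norm r| < |n|
  have habsA : 4 * A^2 ≤ n^2 := by
    nlinarith [_root_.sq_abs A, _root_.sq_abs n, abs_nonneg A, abs_nonneg n]
  have habsB : 4 * B^2 ≤ n^2 := by
    nlinarith [_root_.sq_abs B, _root_.sq_abs n, abs_nonneg B, abs_nonneg n]
  have hmain : 2 * |Zsqrtd.norm r| * |n| ≤ n^2 := by
    have h3 : |2 * (Zsqrtd.norm r * n)| ≤ n^2 := by
      rw [abs_le]
      constructor <;> nlinarith [sq_nonneg A, sq_nonneg B]
    calc 2 * |Zsqrtd.norm r| * |n| = |2 * (Zsqrtd.norm r * n)| := by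
          rw [abs_mul, abs_mul, abs_of_nonneg (by norm_num : (0:ℤ) ≤ 2)]; ring
    _ ≤ n^2 := h3
  have hfin : |Zsqrtd.norm r| < |n| := by
    nlinarith [abs_pos.2 hn0, abs_nonneg (Zsqrtd.norm r), _root_.sq_abs n]
  have h4 : (Zsqrtd.norm r).natAbs < n.natAbs := by
    rw [Int.abs_eq_natAbs, Int.abs_eq_natAbs] at hfin
    exact_mod_cast hfin
  exact h4

theorem exgcd : ∀ N : ℕ, ∀ u v : ℤ√2, (Zsqrtd.norm v).natAbs = N →
    ∃ d a b : ℤ√2, d ∣ u ∧ d ∣ v ∧ a * u + b * v = d := by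
  intro N
  induction N using Nat.strong_induction_on with
  | _ N ih =>
    intro u v hN
    by_cases hv : v = 0
    · exact ⟨u, 1, 0, dvd_refl u, by rw [hv]; exact dvd_zero u, by ring⟩
    · obtain ⟨q, r, hqr, hlt⟩ := div_lemma u v hv
      obtain ⟨d, a, b, hdv, hdr, habd⟩ := ih (Zsqrtd.norm r).natAbs (hN ▸ hlt) v r rfl
      refine ⟨d, b, a - b * q, ?_, hdv, ?_⟩
      · rw [hqr]; exact dvd_add (Dvd.dvd.mul_left hdv q) hdr
      · rw [hqr]; linear_combination habd

end AB

namespace AB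
open Zsqrtd

def eta : ℤ√2 := ⟨1, 1⟩
def etaI : ℤ√2 := ⟨-1, 1⟩

lemma eta_mul : eta * etaI = 1 := by
  ext <;> simp [eta, etaI, Zsqrtd.re_mul, Zsqrtd.im_mul]

lemma emb_eta : emb eta = 1 + rt2 := by rw [emb_apply]; simp [eta]
lemma emb_star_eta : emb (star eta) = 1 - rt2 := by
  rw [emb_apply]; simp [eta, Zsqrtd.re_star, Zsqrtd.im_star]; ring
lemma emb_star_etaI : emb (star etaI) = -1 - rt2 := by
  rw [emb_apply]; simp [etaI, Zsqrtd.re_star, Zsqrtd.im_star]; ring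
lemma emb_etaI : emb etaI = rt2 - 1 := by rw [emb_apply]; simp [etaI]; ring

lemma norm_eta_natAbs : (Zsqrtd.norm eta).natAbs = 1 := by
  simp [Zsqrtd.norm_def, eta]
lemma norm_etaI_natAbs : (Zsqrtd.norm etaI).natAbs = 1 := by
  simp [Zsqrtd.norm_def, etaI]

lemma norm_pow_natAbs (x : ℤ√2) (m : ℕ) :
    (Zsqrtd.norm (x ^ m)).natAbs = (Zsqrtd.norm x).natAbs ^ m := by
  have h : Zsqrtd.norm (x ^ m) = (Zsqrtd.norm x) ^ m :=
    map_pow Zsqrtd.normMonoidHom x m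
  rw [h, Int.natAbs_pow]

noncomputable def y8 : ℝ := 1 + rt2
lemma y8_pos : 0 < y8 := by unfold y8; nlinarith [rt2_pos]
lemma y8_gt_one : 1 < y8 := by unfold y8; nlinarith [rt2_pos]
lemma y8_inv : rt2 - 1 = y8⁻¹ := by
  have h : (rt2 - 1) * y8 = 1 := by unfold y8; nlinarith [rt2_sq]
  exact eq_inv_of_mul_eq_one_left h

lemma abs_emb_star_eta_pow (m : ℕ) : |emb (star (eta ^ m))| = y8 ^ (-(m:ℤ)) := by
  rw [star_pow, map_pow, _root_.abs_pow, emb_star_eta]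
  have h : |1 - rt2| = rt2 - 1 := by
    rw [abs_of_nonpos (by nlinarith [rt2_gt_one])]; ring
  rw [h, y8_inv, zpow_neg, zpow_natCast, inv_pow]

lemma abs_emb_star_etaI_pow (m : ℕ) : |emb (star (etaI ^ m))| = y8 ^ (m:ℤ) := by
  rw [star_pow, map_pow, _root_.abs_pow, emb_star_etaI]
  have h : |-1 - rt2| = y8 := by
    rw [abs_of_nonpos (by nlinarith [rt2_pos])]; unfold y8; ring
  rw [h, zpow_natCast]

/-- adjustment of a nonzero element by units and sign -/
lemma adjust (d : ℤ√2) (hd0 : d ≠ 0) :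
    ∃ d' : ℤ√2, (∀ u : ℤ√2, d ∣ u → d' ∣ u) ∧
      (Zsqrtd.norm d').natAbs = (Zsqrtd.norm d).natAbs ∧
      0 < emb d' ∧ 1 ≤ |emb (star d')| ∧ |emb (star d')| < 1 + rt2 := by
  have hsd : star d ≠ 0 := star_ne_zero hd0
  have hc : 0 < |emb (star d)| := abs_pos.2 (emb_ne_zero hsd)
  obtain ⟨n, hn1, hn2⟩ := exists_mem_Ico_zpow hc y8_gt_one
  obtain ⟨e, e', hee', habs, hnorm⟩ :
      ∃ e e' : ℤ√2, e * e' = 1 ∧ |emb (star e)| = y8 ^ (-n) ∧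
        (Zsqrtd.norm e).natAbs = 1 := by
    rcases le_or_gt 0 n with h | h
    · refine ⟨eta ^ n.toNat, etaI ^ n.toNat, ?_, ?_, ?_⟩
      · rw [← mul_pow, eta_mul, one_pow]
      · rw [abs_emb_star_eta_pow, Int.toNat_of_nonneg h]
      · rw [norm_pow_natAbs, norm_eta_natAbs, one_pow]
    · refine ⟨etaI ^ (-n).toNat, eta ^ (-n).toNat, ?_, ?_, ?_⟩
      · rw [← mul_pow, mul_comm etaI eta, eta_mul, one_pow]
      · rw [abs_emb_star_etaI_pow, Int.toNat_of_nonneg (by omega)]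
      · rw [norm_pow_natAbs, norm_etaI_natAbs, one_pow]
  have he0 : e ≠ 0 := by
    intro h; rw [h, zero_mul] at hee'; exact zero_ne_one hee'
  set w := d * e with hw
  have hw0 : w ≠ 0 := by
    intro h
    apply hd0
    have h2 : w * e' = d := by rw [hw, mul_assoc, hee', mul_one]
    rw [h, zero_mul] at h2
    exact h2.symm
  have hy8ne : y8 ≠ 0 := ne_of_gt y8_pos
  have hstarw : |emb (star w)| = |emb (star d)| * y8 ^ (-n) := by
    rw [hw, star_mul', map_mul, abs_mul, habs, mul_comm]
  have hlb : 1 ≤ |emb (star w)| := by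
    rw [hstarw]
    calc (1:ℝ) = y8 ^ n * y8 ^ (-n) := by
          rw [← zpow_add₀ hy8ne, add_neg_cancel, zpow_zero]
    _ ≤ |emb (star d)| * y8 ^ (-n) :=
          mul_le_mul_of_nonneg_right hn1 (le_of_lt (zpow_pos y8_pos _))
  have hub : |emb (star w)| < 1 + rt2 := by
    rw [hstarw]
    calc |emb (star d)| * y8 ^ (-n) < y8 ^ (n+1) * y8 ^ (-n) :=
          mul_lt_mul_of_pos_right hn2 (zpow_pos y8_pos _)
    _ = y8 := by rw [← zpow_add₀ hy8ne]; norm_num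
    _ = 1 + rt2 := rfl
  have hdvd : ∀ u : ℤ√2, d ∣ u → w ∣ u := by
    intro u ⟨k, hk⟩
    exact ⟨e' * k, by rw [hk, hw]; rw [show d * e * (e' * k) = d * (e * e') * k by ring,
      hee', mul_one]⟩
  have hnormw : (Zsqrtd.norm w).natAbs = (Zsqrtd.norm d).natAbs := by
    rw [hw, Zsqrtd.norm_mul, Int.natAbs_mul, hnorm, mul_one]
  have hembw : emb w ≠ 0 := emb_ne_zero hw0
  rcases lt_or_gt_of_ne hembw with hneg | hpos
  · refine ⟨-w, ?_, ?_, ?_, ?_, ?_⟩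
    · intro u hu; rw [neg_dvd]; exact hdvd u hu
    · rw [Zsqrtd.norm_neg]; exact hnormw
    · rw [map_neg]; linarith
    · rw [star_neg, map_neg, abs_neg]; exact hlb
    · rw [star_neg, map_neg, abs_neg]; exact hub
  · exact ⟨w, hdvd, hnormw, hpos, hlb, hub⟩

end AB

namespace AB
open Zsqrtd

lemma one_add_rt2_cast : ((1 + rt2 : ℝ) : ℂ) = (1 + Real.sqrt 2 : ℂ) := by
  push_cast [rt2]; ring

end AB


section Main
open AB Zsqrtd

/-- A nonzero vertex x = x₁ + x₂ζ₈ (x₁, x₂ ∈ ℤ[√2]) of the Ammann–Beenker point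
set is visible from the origin iff (1+√2)·σ(x) ∉ W₈ and the ideal of ℤ[√2]
generated by x₁ and x₂ is all of ℤ[√2]. Here σ is the ring homomorphism on
ℤ[ζ₈] determined by ζ₈ ↦ ζ₈³. -/
theorem ammann_beenker_visibility
    (σ : R8 →+* ℂ)
    (hσ : σ ⟨zeta8, Subring.subset_closure rfl⟩ = zeta8 ^ 3)
    (x : ℂ) (hxR : x ∈ R8) (hx0 : x ≠ 0) (hxT : x ∈ ABverts σ)
    (x₁ x₂ : S8) (hrep : (x₁ : ℂ) + (x₂ : ℂ) * zeta8 = x) :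
    (¬ ∃ t : ℝ, t ∈ Set.Ioo (0 : ℝ) 1 ∧ (t : ℂ) * x ∈ ABverts σ) ↔
      ((1 + Real.sqrt 2 : ℂ) * σ ⟨x, hxR⟩ ∉ W8 ∧
        Ideal.span {x₁, x₂} = (⊤ : Ideal S8)) := by
  obtain ⟨u, hu⟩ := mem_S8 (x₁ : ℂ) x₁.2
  obtain ⟨v, hv⟩ := mem_S8 (x₂ : ℂ) x₂.2
  have hxuv : x = embC u + embC v * zeta8 := by rw [hu, hv, hrep]
  have hσx : σ ⟨x, hxR⟩ = embC (star u) + embC (star v) * zeta8 ^ 3 :=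
    sigma_spec σ hσ u v x hxR hxuv
  have hr1 := rt2_gt_one
  have hr2 := rt2_lt
  constructor
  · -- visible → conditions
    intro hvis
    constructor
    · -- first condition
      intro hin
      apply hvis
      refine ⟨rt2 - 1, ⟨by nlinarith, by nlinarith⟩, ?_⟩
      have h1 : ((rt2 - 1 : ℝ) : ℂ) * x = embC (etaI * u) + embC (etaI * v) * zeta8 := by
        rw [hxuv, map_mul, map_mul]
        have : embC etaI = ((rt2 - 1 : ℝ) : ℂ) := by
          rw [embC_real, emb_etaI]
        rw [this]; ring
      have hR : ((rt2 - 1 : ℝ) : ℂ) * x ∈ R8 := by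
        rw [h1]
        exact add_mem (embC_mem_R8 _) (mul_mem (embC_mem_R8 _) zeta8_mem)
      refine ⟨hR, ?_⟩
      have hσt : σ ⟨((rt2 - 1 : ℝ) : ℂ) * x, hR⟩ =
          embC (star etaI) * (embC (star u) + embC (star v) * zeta8 ^ 3) := by
        rw [sigma_spec σ hσ (etaI * u) (etaI * v) _ hR h1, star_mul', star_mul',
          map_mul, map_mul]
        ring
      rw [hσt, ← hσx]
      have hse : embC (star etaI) = ((-1 - rt2 : ℝ) : ℂ) := by
        rw [embC_real, emb_star_etaI]
      rw [hse]
      have hneg : ((-1 - rt2 : ℝ) : ℂ) * σ ⟨x, hxR⟩ =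
          -(((1 + rt2 : ℝ) : ℂ) * σ ⟨x, hxR⟩) := by push_cast; ring
      rw [hneg, one_add_rt2_cast]
      exact W8_neg hin
    · -- second condition : gcd
      by_contra hspan
      obtain ⟨d, a, b, hdu, hdv, hde⟩ := exgcd (Zsqrtd.norm v).natAbs u v rfl
      have hd0 : d ≠ 0 := by
        intro h
        rw [h] at hdu hdv
        rw [zero_dvd_iff] at hdu hdv
        apply hx0
        rw [hxuv, hdu, hdv, map_zero]; ring
      have hdnu : ¬ IsUnit d := by
        intro hunit
        obtain ⟨c, hc⟩ := isUnit_iff_exists_inv.1 hunit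
        apply hspan
        rw [Ideal.eq_top_iff_one]
        rw [Ideal.mem_span_pair]
        refine ⟨⟨embC (c * a), embC_mem_S8 _⟩, ⟨embC (c * b), embC_mem_S8 _⟩, ?_⟩
        apply Subtype.ext
        push_cast
        rw [← hu, ← hv]
        calc embC (c * a) * embC u + embC (c * b) * embC v
            = embC (c * (a * u + b * v)) := by simp only [map_mul, map_add]; ring
        _ = embC (d * c) := by rw [hde, mul_comm]
        _ = 1 := by rw [hc, map_one]
      have hd2 : 2 ≤ (Zsqrtd.norm d).natAbs := by
        have h0 : (Zsqrtd.norm d).natAbs ≠ 0 := by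
          intro h
          apply hd0
          exact (Zsqrtd.norm_eq_zero two_nonsquare d).1 (Int.natAbs_eq_zero.1 h)
        have h1 : (Zsqrtd.norm d).natAbs ≠ 1 := fun h => hdnu (Zsqrtd.norm_eq_one_iff.1 h)
        omega
      obtain ⟨d', hdvd, hnormeq, hpos, hlb, hub⟩ := adjust d hd0
      have hnr : 2 ≤ |((Zsqrtd.norm d' : ℤ) : ℝ)| := by
        have : 2 ≤ (Zsqrtd.norm d').natAbs := hnormeq ▸ hd2
        calc (2:ℝ) ≤ ((Zsqrtd.norm d').natAbs : ℝ) := by exact_mod_cast this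
        _ = |((Zsqrtd.norm d' : ℤ) : ℝ)| := by
            rw [Nat.cast_natAbs]; push_cast; ring
      have hgt1 : 1 < emb d' := key_ineq2 d' hpos hlb hub hnr
      obtain ⟨u₁, hu₁⟩ := hdvd u hdu
      obtain ⟨v₁, hv₁⟩ := hdvd v hdv
      set s := emb (star d') with hs
      have hsne : s ≠ 0 := by
        intro h; rw [h] at hlb; simp at hlb; linarith
      apply hvis
      refine ⟨(emb d')⁻¹, ⟨by positivity, by
        rw [inv_lt_one_iff₀]; right; exact hgt1⟩, ?_⟩
      have hdne : ((emb d' : ℝ) : ℂ) ≠ 0 := by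
        exact_mod_cast ne_of_gt (lt_trans one_pos hgt1)
      have h1 : (((emb d')⁻¹ : ℝ) : ℂ) * x = embC u₁ + embC v₁ * zeta8 := by
        rw [hxuv, hu₁, hv₁, map_mul, map_mul, embC_real d']
        push_cast
        field_simp
      have hR : (((emb d')⁻¹ : ℝ) : ℂ) * x ∈ R8 := by
        rw [h1]
        exact add_mem (embC_mem_R8 _) (mul_mem (embC_mem_R8 _) zeta8_mem)
      refine ⟨hR, ?_⟩
      have hσt : σ ⟨(((emb d')⁻¹ : ℝ) : ℂ) * x, hR⟩ =
          embC (star u₁) + embC (star v₁) * zeta8 ^ 3 :=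
        sigma_spec σ hσ u₁ v₁ _ hR h1
      rw [hσt]
      -- σ x = s * (that)
      obtain ⟨hz, hW⟩ := hxT
      have hzx : σ ⟨x, hz⟩ = σ ⟨x, hxR⟩ := rfl
      rw [hzx, hσx] at hW
      have hfact : embC (star u) + embC (star v) * zeta8 ^ 3 =
          ((s : ℝ) : ℂ) * (embC (star u₁) + embC (star v₁) * zeta8 ^ 3) := by
        rw [hu₁, hv₁, star_mul', star_mul', map_mul, map_mul, hs, ← embC_real]
        ring
      rw [hfact] at hW
      have := W8_of_smul hW (le_of_lt one_pos) hlb hsne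
      rwa [Complex.ofReal_one, one_mul] at this
  · -- conditions → visible
    rintro ⟨hout, hspan⟩ ⟨t, ⟨ht0, ht1⟩, htR', htW⟩
    obtain ⟨u', v', htx⟩ := mem_R8 _ htR'
    have h1 : (t:ℂ) * x = ((t * emb u : ℝ) : ℂ) + ((t * emb v : ℝ) : ℂ) * zeta8 := by
      rw [hxuv, embC_real u, embC_real v]; push_cast; ring
    have h2 : ((t * emb u : ℝ) : ℂ) + ((t * emb v : ℝ) : ℂ) * zeta8 =
        ((emb u' : ℝ) : ℂ) + ((emb v' : ℝ) : ℂ) * zeta8 := by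
      rw [← h1, htx, embC_real, embC_real]
    obtain ⟨hqu, hqv⟩ := real_decomp_unique h2
    rw [Ideal.eq_top_iff_one] at hspan
    obtain ⟨A, B, hab⟩ := Ideal.mem_span_pair.1 hspan
    obtain ⟨wa, hwa⟩ := mem_S8 (A : ℂ) A.2
    obtain ⟨wb, hwb⟩ := mem_S8 (B : ℂ) B.2
    have habC : embC wa * embC u + embC wb * embC v = 1 := by
      have h := congrArg (Subtype.val) hab
      push_cast at h
      rw [hwa, hwb, hu, hv]
      exact h
    set w := wa * u' + wb * v' with hwdef
    have hts : (t:ℂ) = embC w := by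
      calc (t:ℂ) = (t:ℂ) * (embC wa * embC u + embC wb * embC v) := by
            rw [habC, mul_one]
      _ = embC wa * ((t * emb u : ℝ) : ℂ) + embC wb * ((t * emb v : ℝ) : ℂ) := by
            rw [embC_real u, embC_real v]; push_cast; ring
      _ = embC wa * embC u' + embC wb * embC v' := by
            rw [hqu, hqv, ← embC_real, ← embC_real]
      _ = embC w := by rw [hwdef, map_add, map_mul, map_mul]
    have hembw : emb w = t := by
      have h3 : ((emb w : ℝ) : ℂ) = ((t : ℝ) : ℂ) := by rw [← embC_real, ← hts]
      exact_mod_cast h3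
    have hkey : 1 + rt2 ≤ |emb (star w)| :=
      key_ineq w (by rw [hembw]; exact ht0) (by rw [hembw]; exact ht1)
    have huu : u' = w * u := by
      apply embC_inj
      calc embC u' = ((t * emb u : ℝ) : ℂ) := by rw [embC_real, hqu]
      _ = embC (w * u) := by rw [map_mul]; push_cast; rw [hts, embC_real u]
    have hvv : v' = w * v := by
      apply embC_inj
      calc embC v' = ((t * emb v : ℝ) : ℂ) := by rw [embC_real, hqv]
      _ = embC (w * v) := by rw [map_mul]; push_cast; rw [hts, embC_real v]
    have hσt : σ ⟨(t:ℂ) * x, htR'⟩ = embC (star u') + embC (star v') * zeta8 ^ 3 :=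
      sigma_spec σ hσ u' v' _ htR' htx
    rw [hσt] at htW
    have hfact : embC (star u') + embC (star v') * zeta8 ^ 3 =
        ((emb (star w) : ℝ) : ℂ) * (embC (star u) + embC (star v) * zeta8 ^ 3) := by
      rw [huu, hvv, star_mul', star_mul', map_mul, map_mul, ← embC_real]
      ring
    rw [hfact, ← hσx] at htW
    apply hout
    have hsne : emb (star w) ≠ 0 := by
      intro h; rw [h] at hkey; simp at hkey; nlinarith
    have hfin := W8_of_smul htW (b := 1 + rt2) (by nlinarith) hkey hsne
    rwa [one_add_rt2_cast] at hfin


end Main
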